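/- The function g₃(x) = e^{−x} + (x/4) e^{−x} + (3x/4) e^{−x/3} is nonincreasing on [0, ∞). -/

import Mathlib

private lemma g3_hasDerivAt (x : ℝ) :
    HasDerivAt
      (fun x : ℝ => Real.exp (-x) + (x / 4) * Real.exp (-x) + (3 * x / 4) * Real.exp (-x / 3))
      (Real.exp (-x) * (-(3 + x) / 4) + Real.exp (-x / 3) * ((3 - x) / 4)) x := by
  have he : HasDerivAt (fun x : ℝ => Real.exp (-x)) (-Real.exp (-x)) x := by
    exact ((Real.hasDerivAt_exp (-x)).comp x (hasDerivAt_neg x)).congr_deriv (by ring)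
  have he3 : HasDerivAt (fun x : ℝ => Real.exp (-x / 3)) (-Real.exp (-x / 3) / 3) x := by
    have h : HasDerivAt (fun x : ℝ => -x / 3) (-1 / 3) x := (hasDerivAt_neg x).div_const 3
    have := (Real.hasDerivAt_exp (-x / 3)).comp x h
    exact this.congr_deriv (by ring)
  have h1 : HasDerivAt (fun x : ℝ => x / 4) (1 / 4) x := (hasDerivAt_id x).div_const 4
  have h2 : HasDerivAt (fun x : ℝ => 3 * x / 4) (3 / 4) x := by
    simpa using ((hasDerivAt_id x).const_mul 3).div_const 4
  have H := (he.add (h1.mul he)).add (h2.mul he3)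
  exact H.congr_deriv (by ring)

/-- auxiliary function g(x) = (3+x)e^{-x} - (3-x)e^{-x/3} and its derivative -/
private lemma gaux_hasDerivAt (x : ℝ) :
    HasDerivAt
      (fun x : ℝ => (3 + x) * Real.exp (-x) - (3 - x) * Real.exp (-x / 3))
      (-(2 + x) * Real.exp (-x) + ((6 - x) / 3) * Real.exp (-x / 3)) x := by
  have he : HasDerivAt (fun x : ℝ => Real.exp (-x)) (-Real.exp (-x)) x := by
    exact ((Real.hasDerivAt_exp (-x)).comp x (hasDerivAt_neg x)).congr_deriv (by ring)
  have he3 : HasDerivAt (fun x : ℝ => Real.exp (-x / 3)) (-Real.exp (-x / 3) / 3) x := by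
    have h : HasDerivAt (fun x : ℝ => -x / 3) (-1 / 3) x := (hasDerivAt_neg x).div_const 3
    have := (Real.hasDerivAt_exp (-x / 3)).comp x h
    exact this.congr_deriv (by ring)
  have ha : HasDerivAt (fun x : ℝ => (3 : ℝ) + x) 1 x := by
    simpa using (hasDerivAt_id x).const_add 3
  have hb : HasDerivAt (fun x : ℝ => (3 : ℝ) - x) (-1) x := by
    exact (hasDerivAt_id x).const_sub 3
  have H := (ha.mul he).sub (hb.mul he3)
  exact H.congr_deriv (by ring)

/-- cubic Taylor lower bound for exp -/
private lemma exp_taylor3 {t : ℝ} (ht : 0 ≤ t) :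
    1 + t + t ^ 2 / 2 + t ^ 3 / 6 ≤ Real.exp t := by
  have := Real.sum_le_exp_of_nonneg ht 4
  norm_num [Finset.sum_range_succ, Nat.factorial] at this
  linarith [this]

/-- g' ≥ 0 on [0,3] -/
private lemma gaux_deriv_nonneg {x : ℝ} (h0 : 0 ≤ x) (h3 : x ≤ 3) :
    0 ≤ -(2 + x) * Real.exp (-x) + ((6 - x) / 3) * Real.exp (-x / 3) := by
  set t : ℝ := 2 * x / 3 with htdef
  have ht : 0 ≤ t := by positivity
  have hQ : (0:ℝ) < 1 + t + t ^ 2 / 2 + t ^ 3 / 6 := by positivity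
  have hT := exp_taylor3 ht
  -- e^{-x} = e^{-x/3} * e^{-t} and e^{-t} ≤ 1/Q
  have hsplit : Real.exp (-x) = Real.exp (-x / 3) * (Real.exp t)⁻¹ := by
    rw [← Real.exp_neg, ← Real.exp_add]; congr 1; rw [htdef]; ring
  have hinv : (Real.exp t)⁻¹ ≤ (1 + t + t ^ 2 / 2 + t ^ 3 / 6)⁻¹ :=
    inv_anti₀ hQ hT
  have hE3 : (0:ℝ) < Real.exp (-x / 3) := Real.exp_pos _
  -- reduce to polynomial inequality (6-x) * Q ≥ 3 * (2+x)
  have hpoly : 3 * (2 + x) ≤ (6 - x) * (1 + t + t ^ 2 / 2 + t ^ 3 / 6) := by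
    rw [htdef]
    nlinarith [mul_nonneg (mul_nonneg (sq_nonneg x) (by linarith : (0:ℝ) ≤ 3 - x)) h0,
      mul_nonneg (sq_nonneg x) (by linarith : (0:ℝ) ≤ 54 - 6 * x)]
  have hkey : (2 + x) * (Real.exp t)⁻¹ ≤ (6 - x) / 3 := by
    have h1 : (2 + x) * (Real.exp t)⁻¹ ≤ (2 + x) * (1 + t + t ^ 2 / 2 + t ^ 3 / 6)⁻¹ := by
      apply mul_le_mul_of_nonneg_left hinv (by linarith)
    refine h1.trans ?_
    rw [inv_eq_one_div, mul_one_div, div_le_div_iff₀ hQ (by norm_num : (0:ℝ) < 3)]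
    linarith [hpoly]
  have := mul_le_mul_of_nonneg_left hkey hE3.le
  rw [hsplit]
  nlinarith [this]

private lemma gaux_nonneg {x : ℝ} (h0 : 0 ≤ x) :
    0 ≤ (3 + x) * Real.exp (-x) - (3 - x) * Real.exp (-x / 3) := by
  rcases le_or_gt x 3 with h3 | h3
  · -- monotone on [0,3], value 0 at 0
    have hmono : MonotoneOn
        (fun x : ℝ => (3 + x) * Real.exp (-x) - (3 - x) * Real.exp (-x / 3))
        (Set.Icc (0:ℝ) 3) := by
      apply monotoneOn_of_deriv_nonneg (convex_Icc 0 3)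
      · exact Continuous.continuousOn (by continuity)
      · intro y hy
        exact (gaux_hasDerivAt y).differentiableAt.differentiableWithinAt
      · intro y hy
        rw [interior_Icc] at hy
        rw [(gaux_hasDerivAt y).deriv]
        exact gaux_deriv_nonneg hy.1.le hy.2.le
    have h := hmono (Set.mem_Icc.2 ⟨le_refl 0, by norm_num⟩) (Set.mem_Icc.2 ⟨h0, h3⟩) h0
    simpa using h
  · have h1 : (0:ℝ) < (3 + x) * Real.exp (-x) := by positivity
    have h2 : (3 - x) * Real.exp (-x / 3) ≤ 0 :=
      mul_nonpos_of_nonpos_of_nonneg (by linarith) (Real.exp_pos _).le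
    linarith

private lemma g3_key {x : ℝ} (hx : 0 < x) :
    Real.exp (-x) * (-(3 + x) / 4) + Real.exp (-x / 3) * ((3 - x) / 4) ≤ 0 := by
  have := gaux_nonneg hx.le
  nlinarith [this]

/-- The final-stage stability function of Heun-sIFRK(3,3):
`g₃(x) = e^{−x} + (x/4)e^{−x} + (3x/4)e^{−x/3}` is nonincreasing on `[0, ∞)`. -/
theorem stmt_15 :
    AntitoneOn
      (fun x : ℝ => Real.exp (-x) + (x / 4) * Real.exp (-x) + (3 * x / 4) * Real.exp (-x / 3))
      (Set.Ici (0 : ℝ)) := by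
  apply antitoneOn_of_deriv_nonpos (convex_Ici 0)
  · exact Continuous.continuousOn (by continuity)
  · intro x hx
    exact (g3_hasDerivAt x).differentiableAt.differentiableWithinAt
  · intro x hx
    rw [interior_Ici] at hx
    rw [(g3_hasDerivAt x).deriv]
    exact g3_key hx
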